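/- Let b ≠ 0 and let h_b be the b-orbit, i.e. the unique solution of h''(x) − coth(x) h'(x) + sin(2 h(x)) = 0 on (0,∞) with h_b(x)/x² → b as x → 0⁺. If |h_b(x)| < π/2 for all x > 0, then lim_{x→∞} h_b'(x) = 0 and either lim_{x→∞} h_b(x) = π/2 or lim_{x→∞} h_b(x) = −π/2; in other words, h_b is a connecting orbit. -/

import Mathlib

open Real Set Filter Topology

lemma coth_gt_one {x : ℝ} (hx : 0 < x) : 1 < Real.cosh x / Real.sinh x :=
  (one_lt_div (Real.sinh_pos_iff.2 hx)).2 (Real.sinh_lt_cosh x)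

lemma coth_le_coth_one {x : ℝ} (hx : 1 ≤ x) :
    Real.cosh x / Real.sinh x ≤ Real.cosh 1 / Real.sinh 1 := by
  rw [div_le_div_iff₀ (Real.sinh_pos_iff.2 (lt_of_lt_of_le one_pos hx)) (Real.sinh_pos_iff.2 one_pos)]
  have h1 : Real.sinh (1 - x) ≤ 0 := Real.sinh_nonpos_iff.2 (by linarith)
  rw [Real.sinh_sub] at h1
  nlinarith [h1]

lemma sign_const {φ : ℝ → ℝ} {a : ℝ} (hc : ContinuousOn φ (Set.Ici a))
    (hne : ∀ y ∈ Set.Ici a, φ y ≠ 0) :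
    (∀ y ∈ Set.Ici a, 0 < φ y) ∨ (∀ y ∈ Set.Ici a, φ y < 0) := by
  rcases lt_or_gt_of_ne (hne a Set.self_mem_Ici) with h0 | h0
  · right
    intro y hy
    by_contra hcon
    push_neg at hcon
    have hypos : 0 < φ y := lt_of_le_of_ne hcon (Ne.symm (hne y hy))
    have hsub : Set.uIcc a y ⊆ Set.Ici a := by
      rw [Set.uIcc_of_le hy]; exact Set.Icc_subset_Ici_self
    have h0mem : (0:ℝ) ∈ Set.uIcc (φ a) (φ y) := Set.mem_uIcc.2 (Or.inl ⟨h0.le, hypos.le⟩)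
    obtain ⟨z, hz, hz0⟩ := intermediate_value_uIcc (hc.mono hsub) h0mem
    exact hne z (hsub hz) hz0
  · left
    intro y hy
    by_contra hcon
    push_neg at hcon
    have hyneg : φ y < 0 := lt_of_le_of_ne hcon (hne y hy)
    have hsub : Set.uIcc a y ⊆ Set.Ici a := by
      rw [Set.uIcc_of_le hy]; exact Set.Icc_subset_Ici_self
    have h0mem : (0:ℝ) ∈ Set.uIcc (φ a) (φ y) := Set.mem_uIcc.2 (Or.inr ⟨hyneg.le, h0.le⟩)
    obtain ⟨z, hz, hz0⟩ := intermediate_value_uIcc (hc.mono hsub) h0mem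
    exact hne z (hsub hz) hz0

/-- A global `C²` solution of equation (14), `h'' - coth(x) h' + sin(2h) = 0` on `(0,∞)`. -/
def SolvesEq14 (h : ℝ → ℝ) : Prop :=
  ContDiffOn ℝ 2 h (Set.Ioi 0) ∧
  ∀ x ∈ Set.Ioi (0:ℝ),
    deriv (deriv h) x - (Real.cosh x / Real.sinh x) * deriv h x + Real.sin (2 * h x) = 0

/-- The `b`-orbit: a global solution of equation (14) with `h(x)/x² → b` as `x → 0⁺`. -/
def IsBOrbit (b : ℝ) (h : ℝ → ℝ) : Prop :=
  SolvesEq14 h ∧ Filter.Tendsto (fun x => h x / x ^ 2) (𝓝[>] (0:ℝ)) (𝓝 b)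

set_option maxHeartbeats 4000000 in
/-- **Lemma 2.** A `b`-orbit (with `b ≠ 0`) which satisfies `|h(x)| < π/2` for all
`x > 0` is a connecting orbit: `h' → 0` and `h → π/2` or `h → -π/2` as `x → ∞`. -/
theorem trapped_b_orbit_is_connecting
    (b : ℝ) (hb : b ≠ 0) (h : ℝ → ℝ) (horb : IsBOrbit b h)
    (hbound : ∀ x > (0:ℝ), |h x| < π / 2) :
    Filter.Tendsto (deriv h) Filter.atTop (𝓝 0) ∧
    (Filter.Tendsto h Filter.atTop (𝓝 (π / 2)) ∨
      Filter.Tendsto h Filter.atTop (𝓝 (-(π / 2)))) := by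
  obtain ⟨⟨hC2, hODE⟩, hlim⟩ := horb
  obtain ⟨f, hfdef⟩ : ∃ f : ℝ → ℝ, f = deriv h := ⟨_, rfl⟩
  have hopen : IsOpen (Set.Ioi (0:ℝ)) := isOpen_Ioi
  have hhd : ∀ x ∈ Set.Ioi (0:ℝ), DifferentiableAt ℝ h x := fun x hx =>
    (hC2.differentiableOn (by norm_num)).differentiableAt (hopen.mem_nhds hx)
  have hC1f : ContDiffOn ℝ 1 f (Set.Ioi 0) := hfdef ▸ hC2.deriv_of_isOpen hopen (by norm_num)
  have hfd : ∀ x ∈ Set.Ioi (0:ℝ), DifferentiableAt ℝ f x := fun x hx =>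
    (hC1f.differentiableOn (by norm_num)).differentiableAt (hopen.mem_nhds hx)
  have hfc : ContinuousOn f (Set.Ioi 0) := hC1f.continuousOn
  have hhc : ContinuousOn h (Set.Ioi 0) := hC2.continuousOn
  have hg : ∀ x ∈ Set.Ioi (0:ℝ),
      deriv f x = (Real.cosh x / Real.sinh x) * f x - Real.sin (2 * h x) := by
    intro x hx
    have := hODE x hx
    rw [← hfdef] at this
    linarith
  obtain ⟨E, hEdef⟩ : ∃ E : ℝ → ℝ, E = fun x => (f x)^2/2 - Real.cos (2 * h x) / 2 := ⟨_, rfl⟩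
  have hEeq : ∀ x, E x = (f x)^2/2 - Real.cos (2 * h x) / 2 := fun x => by rw [hEdef]
  have hE' : ∀ x ∈ Set.Ioi (0:ℝ),
      HasDerivAt E ((Real.cosh x / Real.sinh x) * (f x)^2) x := by
    intro x hx
    have h1 : HasDerivAt h (f x) x := hfdef ▸ (hhd x hx).hasDerivAt
    have h2 : HasDerivAt f (deriv f x) x := (hfd x hx).hasDerivAt
    have h3 : HasDerivAt (fun y => 2 * h y) (2 * f x) x := h1.const_mul 2
    have h4 : HasDerivAt (fun y => Real.cos (2 * h y)) (-Real.sin (2 * h x) * (2 * f x)) x :=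
      h3.cos
    have h5 : HasDerivAt (fun y => (f y)^2/2) (((2:ℕ) * f x ^ 1 * deriv f x)/2) x :=
      (h2.pow 2).div_const 2
    have h6 := h5.sub (h4.div_const 2)
    rw [hEdef]
    refine HasDerivAt.congr_deriv h6 ?_
    rw [hg x hx]
    push_cast
    ring
  have hEd : ∀ x ∈ Set.Ioi (0:ℝ), DifferentiableAt ℝ E x := fun x hx =>
    (hE' x hx).differentiableAt
  have hEderiv : ∀ x ∈ Set.Ioi (0:ℝ),
      deriv E x = (Real.cosh x / Real.sinh x) * (f x)^2 := fun x hx => (hE' x hx).deriv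
  have hEmono : ∀ x y : ℝ, 0 < x → x ≤ y → E x ≤ E y := by
    intro x y hx hxy
    have hsub : Set.Ici x ⊆ Set.Ioi (0:ℝ) := fun z hz => lt_of_lt_of_le hx hz
    have hcont : ContinuousOn E (Set.Ici x) := fun z hz =>
      ((hEd z (hsub hz)).continuousAt).continuousWithinAt
    have hdiff : DifferentiableOn ℝ E (interior (Set.Ici x)) := by
      rw [interior_Ici]
      exact fun z hz => (hEd z (lt_trans hx hz)).differentiableWithinAt
    have hge : ∀ z ∈ interior (Set.Ici x), (0:ℝ) ≤ deriv E z := by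
      rw [interior_Ici]
      intro z hz
      have hz0 : z ∈ Set.Ioi (0:ℝ) := lt_trans hx hz
      rw [hEderiv z hz0]
      have h1 := coth_gt_one hz0
      nlinarith [sq_nonneg (f z)]
    have := (convex_Ici x).mul_sub_le_image_sub_of_le_deriv hcont hdiff hge
      x Set.self_mem_Ici y hxy hxy
    linarith
  -- E is bounded above by 1/2
  have hEhalf : ∀ x ∈ Set.Ioi (0:ℝ), E x ≤ 1/2 := by
    intro x₀ hx₀
    by_contra hcon
    push_neg at hcon
    have hδ2 : 0 < 2 * E x₀ - 1 := by linarith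
    obtain ⟨δ, hδdef⟩ : ∃ d : ℝ, d = Real.sqrt (2 * E x₀ - 1) := ⟨_, rfl⟩
    have hδpos : 0 < δ := hδdef ▸ Real.sqrt_pos.2 hδ2
    have hfsq : ∀ y, x₀ ≤ y → δ^2 ≤ (f y)^2 := by
      intro y hy
      have hEy : E x₀ ≤ E y := hEmono x₀ y hx₀ hy
      have hcos : -1 ≤ Real.cos (2 * h y) := Real.neg_one_le_cos _
      have hEyd : E y = (f y)^2/2 - Real.cos (2 * h y)/2 := hEeq y
      rw [hδdef, Real.sq_sqrt hδ2.le]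
      linarith
    have hfne : ∀ y ∈ Set.Ici x₀, f y ≠ 0 := by
      intro y hy hy0
      have := hfsq y hy
      rw [hy0] at this
      nlinarith
    have hsubf : Set.Ici x₀ ⊆ Set.Ioi (0:ℝ) := fun z hz => Set.mem_Ioi.2 (lt_of_lt_of_le hx₀ hz)
    have hcontf : ContinuousOn f (Set.Ici x₀) := hfc.mono hsubf
    have hconth : ContinuousOn h (Set.Ici x₀) := hhc.mono hsubf
    have hdiffh : DifferentiableOn ℝ h (interior (Set.Ici x₀)) := by
      rw [interior_Ici]
      exact fun z hz => (hhd z (Set.mem_Ioi.2 (lt_trans hx₀ hz))).differentiableWithinAt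
    obtain ⟨y₀, hy₀def⟩ : ∃ y : ℝ, y = x₀ + 2*π/δ := ⟨_, rfl⟩
    have hy₀ : x₀ ≤ y₀ := by
      have h9 : 0 < 2*π/δ := by positivity
      rw [hy₀def]
      linarith
    have hy₀mem : y₀ ∈ Set.Ici x₀ := hy₀
    have hy₀pos : 0 < y₀ := lt_of_lt_of_le hx₀ hy₀
    have hδy : δ * (y₀ - x₀) = 2*π := by
      rw [hy₀def]
      field_simp
      ring
    have hbx₀ := abs_lt.1 (hbound x₀ hx₀)
    have hby₀ := abs_lt.1 (hbound y₀ hy₀pos)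
    rcases sign_const hcontf hfne with hpos | hneg
    · have hge : ∀ z ∈ interior (Set.Ici x₀), δ ≤ deriv h z := by
        rw [interior_Ici]
        intro z hz
        have hz' : z ∈ Set.Ici x₀ := Set.mem_Ici.2 (le_of_lt hz)
        have h1 := hfsq z (le_of_lt hz)
        have h2 := hpos z hz'
        rw [← hfdef]
        nlinarith
      have := (convex_Ici x₀).mul_sub_le_image_sub_of_le_deriv hconth hdiffh hge
        x₀ Set.self_mem_Ici y₀ hy₀mem hy₀
      rw [hδy] at this
      have hπ := Real.pi_pos
      linarith
    · have hle : ∀ z ∈ interior (Set.Ici x₀), deriv h z ≤ -δ := by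
        rw [interior_Ici]
        intro z hz
        have hz' : z ∈ Set.Ici x₀ := Set.mem_Ici.2 (le_of_lt hz)
        have h1 := hfsq z (le_of_lt hz)
        have h2 := hneg z hz'
        rw [← hfdef]
        nlinarith
      have := (convex_Ici x₀).image_sub_le_mul_sub_of_deriv_le hconth hdiffh hle
        x₀ Set.self_mem_Ici y₀ hy₀mem hy₀
      have h3 : -δ * (y₀ - x₀) = -(2*π) := by rw [← hδy]; ring
      rw [h3] at this
      have hπ := Real.pi_pos
      linarith
  -- bound on f
  have hfsq2 : ∀ x ∈ Set.Ioi (0:ℝ), (f x)^2 ≤ 2 := by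
    intro x hx
    have h1 : E x ≤ 1/2 := hEhalf x hx
    have h2 : Real.cos (2 * h x) ≤ 1 := Real.cos_le_one _
    have h3 : E x = (f x)^2/2 - Real.cos (2 * h x)/2 := hEeq x
    linarith
  have habs_f : ∀ x ∈ Set.Ioi (0:ℝ), |f x| ≤ 2 := by
    intro x hx
    have := hfsq2 x hx
    rw [abs_le]
    constructor <;> nlinarith
  -- bound on deriv f for x ≥ 1
  obtain ⟨C₀, hC₀def⟩ : ∃ c : ℝ, c = Real.cosh 1 / Real.sinh 1 * 2 + 1 := ⟨_, rfl⟩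
  have hcoth1 : 1 < Real.cosh 1 / Real.sinh 1 := coth_gt_one one_pos
  have hC₀pos : 1 < C₀ := by rw [hC₀def]; linarith
  have hgb : ∀ x, 1 ≤ x → |deriv f x| ≤ C₀ := by
    intro x hx
    have hx0 : x ∈ Set.Ioi (0:ℝ) := lt_of_lt_of_le one_pos hx
    rw [hg x hx0]
    have h1 : |Real.sin (2 * h x)| ≤ 1 := Real.abs_sin_le_one _
    have h2 : |Real.cosh x / Real.sinh x * f x| ≤ Real.cosh 1 / Real.sinh 1 * 2 := by
      rw [abs_mul, abs_of_pos (lt_trans one_pos (coth_gt_one hx0))]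
      exact mul_le_mul (coth_le_coth_one hx) (habs_f x hx0) (abs_nonneg _)
        (by positivity)
    calc |Real.cosh x / Real.sinh x * f x - Real.sin (2 * h x)|
        ≤ |Real.cosh x / Real.sinh x * f x| + |Real.sin (2 * h x)| := abs_sub _ _
      _ ≤ C₀ := by rw [hC₀def]; linarith
  -- E converges to some limit L
  obtain ⟨F, hFdef⟩ : ∃ F : ℝ → ℝ, F = fun x => E (max x 1) := ⟨_, rfl⟩
  have hFeq : ∀ x, F x = E (max x 1) := fun x => by rw [hFdef]
  have hFmono : Monotone F := by
    intro x y hxy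
    rw [hFeq, hFeq]
    exact hEmono _ _ (lt_of_lt_of_le one_pos (le_max_right _ _)) (max_le_max hxy le_rfl)
  have hFbdd : BddAbove (Set.range F) := by
    refine ⟨1/2, ?_⟩
    rintro _ ⟨x, rfl⟩
    rw [hFeq]
    exact hEhalf _ (lt_of_lt_of_le one_pos (le_max_right x 1))
  obtain ⟨L, hLdef⟩ : ∃ l : ℝ, l = ⨆ x, F x := ⟨_, rfl⟩
  have hFL : Tendsto F atTop (𝓝 L) := hLdef ▸ tendsto_atTop_ciSup hFmono hFbdd
  have hEL : Tendsto E atTop (𝓝 L) := by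
    apply hFL.congr'
    filter_upwards [eventually_ge_atTop (1:ℝ)] with x hx
    rw [hFeq, max_eq_left hx]
  have hELle : ∀ x ∈ Set.Ioi (0:ℝ), E x ≤ L := by
    intro x hx
    have h1 : E x ≤ F x := by
      rw [hFeq]
      exact hEmono x (max x 1) hx (le_max_left _ _)
    have h2 : F x ≤ L := hLdef ▸ le_ciSup hFbdd x
    linarith
  have hLhalf : L ≤ 1/2 := by
    refine le_of_tendsto hEL ?_
    filter_upwards [eventually_gt_atTop (0:ℝ)] with x hx
    exact hEhalf x hx
  have hLge : -(1/2) ≤ L := by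
    have h1 : E 1 ≤ L := hELle 1 (by norm_num)
    have h2 : Real.cos (2 * h 1) ≤ 1 := Real.cos_le_one _
    have h3 := hEeq 1
    nlinarith [sq_nonneg (f 1)]
  -- f tends to 0
  have hf0 : Tendsto f atTop (𝓝 0) := by
    by_contra hcon
    rw [Metric.tendsto_atTop] at hcon
    push_neg at hcon
    obtain ⟨ε₀, hε₀, hfreq⟩ := hcon
    obtain ⟨ε, hεdef⟩ : ∃ e : ℝ, e = min ε₀ 1 := ⟨_, rfl⟩
    have hε : 0 < ε := hεdef ▸ lt_min hε₀ one_pos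
    have hε1 : ε ≤ 1 := hεdef ▸ min_le_right _ _
    obtain ⟨δ, hδdef⟩ : ∃ d : ℝ, d = ε / (2 * C₀) := ⟨_, rfl⟩
    have hδ : 0 < δ := by rw [hδdef]; apply div_pos hε; linarith
    have hsmall : 0 < δ * ε^2/16 := by positivity
    obtain ⟨N₀, hN₀⟩ := (Metric.tendsto_atTop.1 hEL) (δ * ε^2/16) hsmall
    obtain ⟨x, hxN, hxf⟩ := hfreq (max N₀ 1 + 1)
    have hx1 : 1 ≤ x := le_trans (by nlinarith [le_max_right N₀ 1] : (1:ℝ) ≤ max N₀ 1 + 1) hxN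
    have hxN₀ : N₀ ≤ x := le_trans (by nlinarith [le_max_left N₀ 1] : N₀ ≤ max N₀ 1 + 1) hxN
    have hxε : ε ≤ |f x| := by
      have h1 : ε₀ ≤ dist (f x) 0 := hxf
      rw [Real.dist_eq, sub_zero] at h1
      exact le_trans (hεdef ▸ min_le_left _ _) h1
    have hsubx : Set.Ici x ⊆ Set.Ioi (0:ℝ) := fun z hz =>
      lt_of_lt_of_le one_pos (le_trans hx1 hz)
    have hcontf2 : ContinuousOn f (Set.Ici x) := hfc.mono hsubx
    have hdifff : DifferentiableOn ℝ f (interior (Set.Ici x)) := by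
      rw [interior_Ici]
      exact fun z hz => (hfd z (hsubx (Set.mem_Ici.2 (le_of_lt hz)))).differentiableWithinAt
    have hub : ∀ z ∈ interior (Set.Ici x), deriv f z ≤ C₀ := by
      rw [interior_Ici]
      intro z hz
      exact (abs_le.1 (hgb z (le_trans hx1 (le_of_lt hz)))).2
    have hlb : ∀ z ∈ interior (Set.Ici x), -C₀ ≤ deriv f z := by
      rw [interior_Ici]
      intro z hz
      exact (abs_le.1 (hgb z (le_trans hx1 (le_of_lt hz)))).1
    -- on [x, x+δ] we have |f y| ≥ ε/2
    have hfy : ∀ y ∈ Set.Icc x (x + δ), ε/2 ≤ |f y| := by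
      intro y hy
      have hymem : y ∈ Set.Ici x := hy.1
      have h1 := (convex_Ici x).image_sub_le_mul_sub_of_deriv_le hcontf2 hdifff hub
        x Set.self_mem_Ici y hymem hy.1
      have h2 := (convex_Ici x).mul_sub_le_image_sub_of_le_deriv hcontf2 hdifff hlb
        x Set.self_mem_Ici y hymem hy.1
      have hyd : y - x ≤ δ := by linarith [hy.2]
      have hC₀δ : C₀ * (y - x) ≤ ε/2 := by
        have h4 : C₀ * (y - x) ≤ C₀ * δ := mul_le_mul_of_nonneg_left hyd (by linarith)
        have h5 : C₀ * δ = ε/2 := by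
          rw [hδdef]
          field_simp
        linarith
      have habs : |f y - f x| ≤ ε/2 := by
        rw [abs_le]
        constructor <;> linarith
      have h6 : |f x| - |f y| ≤ |f y - f x| := by
        rw [abs_sub_comm]
        exact abs_sub_abs_le_abs_sub _ _
      linarith
    -- energy increment on [x, x+δ]
    have hsubI : Set.Icc x (x+δ) ⊆ Set.Ioi (0:ℝ) := fun z hz => hsubx hz.1
    have hcontE : ContinuousOn E (Set.Icc x (x+δ)) := fun z hz =>
      ((hEd z (hsubI hz)).continuousAt).continuousWithinAt
    have hdiffE : DifferentiableOn ℝ E (interior (Set.Icc x (x+δ))) := by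
      intro z hz
      rw [interior_Icc] at hz
      exact (hEd z (hsubI ⟨hz.1.le, hz.2.le⟩)).differentiableWithinAt
    have hgeE : ∀ z ∈ interior (Set.Icc x (x+δ)), ε^2/4 ≤ deriv E z := by
      intro z hz
      rw [interior_Icc] at hz
      have hz' : z ∈ Set.Ioi (0:ℝ) := hsubI ⟨hz.1.le, hz.2.le⟩
      rw [hEderiv z hz']
      have h1 : ε/2 ≤ |f z| := hfy z ⟨hz.1.le, hz.2.le⟩
      have h2 : (ε/2)^2 ≤ (f z)^2 := by
        rw [← sq_abs (f z)]
        exact pow_le_pow_left₀ (by positivity) h1 2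
      have h3 := coth_gt_one hz'
      nlinarith [mul_le_mul_of_nonneg_right h3.le (sq_nonneg (f z))]
    have hEinc := (convex_Icc x (x+δ)).mul_sub_le_image_sub_of_le_deriv hcontE hdiffE hgeE
      x (Set.left_mem_Icc.2 (by linarith)) (x+δ) (Set.right_mem_Icc.2 (by linarith))
      (by linarith)
    have hEx : |E x - L| < δ * ε^2/16 := by
      have := hN₀ x hxN₀
      rwa [Real.dist_eq] at this
    have hEx2 : |E (x+δ) - L| < δ * ε^2/16 := by
      have := hN₀ (x+δ) (by linarith)
      rwa [Real.dist_eq] at this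
    have h7 := abs_lt.1 hEx
    have h8 := abs_lt.1 hEx2
    have h9 : ε^2/4 * ((x+δ) - x) = ε^2 * δ/4 := by ring
    have h10 : 0 < ε^2 * δ := by positivity
    linarith
  -- cos (2h) tends to -(2L)
  have hfsq0 : Tendsto (fun x => (f x)^2) atTop (𝓝 0) := by
    have := hf0.mul hf0
    rw [mul_zero] at this
    apply this.congr
    intro x
    ring
  have hcoslim : Tendsto (fun x => Real.cos (2 * h x)) atTop (𝓝 (-(2*L))) := by
    have h1 : Tendsto (fun x => (f x)^2 - 2 * E x) atTop (𝓝 (0 - 2*L)) :=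
      hfsq0.sub (hEL.const_mul 2)
    rw [show (0:ℝ) - 2*L = -(2*L) by ring] at h1
    apply h1.congr'
    filter_upwards [eventually_gt_atTop (0:ℝ)] with x hx
    have := hEeq x
    linarith
  -- |h| tends to A := arccos (-(2L)) / 2
  obtain ⟨A, hAdef⟩ : ∃ a : ℝ, a = Real.arccos (-(2*L)) / 2 := ⟨_, rfl⟩
  have hπ := Real.pi_pos
  have hA2 : Tendsto (fun x => |h x|) atTop (𝓝 A) := by
    have hc : Tendsto (fun x => Real.arccos (Real.cos (2 * h x)) / 2) atTop (𝓝 A) := by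
      rw [hAdef]
      exact ((Real.continuous_arccos.tendsto _).comp hcoslim).div_const 2
    apply hc.congr'
    filter_upwards [eventually_gt_atTop (0:ℝ)] with x hx
    have habs2 : |2 * h x| ≤ π := by
      rw [abs_mul, abs_two]
      have := (hbound x hx).le
      linarith
    calc Real.arccos (Real.cos (2 * h x)) / 2
        = Real.arccos (Real.cos |2 * h x|) / 2 := by rw [Real.cos_abs]
      _ = |2 * h x| / 2 := by rw [Real.arccos_cos (abs_nonneg _) habs2]
      _ = |h x| := by rw [abs_mul, abs_two]; ring
  have hAnonneg : 0 ≤ A := by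
    rw [hAdef]
    have := Real.arccos_nonneg (-(2*L))
    linarith
  have hAle : A ≤ π/2 := by
    rw [hAdef]
    have := Real.arccos_le_pi (-(2*L))
    linarith
  -- A is positive, since otherwise h ≡ 0 and b = 0
  have hA0 : 0 < A := by
    rcases lt_or_eq_of_le hAnonneg with hlt | heq
    · exact hlt
    · exfalso
      have harc : Real.arccos (-(2*L)) = 0 := by
        rw [hAdef] at heq
        linarith
      have hL2 : 1 ≤ -(2*L) := Real.arccos_eq_zero.1 harc
      have hzero : ∀ x ∈ Set.Ioi (0:ℝ), h x = 0 := by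
        intro x hx
        have h1 : E x ≤ L := hELle x hx
        have h2 := hEeq x
        have h3 : Real.cos (2 * h x) ≤ 1 := Real.cos_le_one _
        have h4 : 1 ≤ Real.cos (2 * h x) := by nlinarith [sq_nonneg (f x)]
        have h5 : Real.cos (2 * h x) = 1 := le_antisymm h3 h4
        have hbx := abs_lt.1 (hbound x hx)
        have h6 : 2 * h x = 0 := by
          rw [Real.cos_eq_one_iff_of_lt_of_lt (by linarith) (by linarith)] at h5
          exact h5
        linarith
      have : Tendsto (fun x : ℝ => h x / x ^ 2) (𝓝[>] (0:ℝ)) (𝓝 0) := by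
        apply tendsto_const_nhds.congr'
        filter_upwards [self_mem_nhdsWithin] with x hx
        rw [hzero x hx, zero_div]
      exact hb (tendsto_nhds_unique hlim this)
  -- eventually |h| > A/2, hence h has constant sign on some [X₀, ∞)
  obtain ⟨X₀, hX₀1, hX₀⟩ : ∃ X₀ : ℝ, 1 ≤ X₀ ∧ ∀ y ∈ Set.Ici X₀, A/2 < |h y| := by
    have h1 : ∀ᶠ x in atTop, A/2 < |h x| :=
      hA2.eventually (eventually_gt_nhds (by linarith))
    obtain ⟨N, hN⟩ := (h1.and (eventually_ge_atTop (1:ℝ))).exists_forall_of_atTop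
    exact ⟨max N 1, le_max_right _ _, fun y hy =>
      (hN y (le_trans (le_max_left _ _) hy)).1⟩
  have hsubX : Set.Ici X₀ ⊆ Set.Ioi (0:ℝ) := fun z hz =>
    lt_of_lt_of_le one_pos (le_trans hX₀1 hz)
  have hne : ∀ y ∈ Set.Ici X₀, h y ≠ 0 := by
    intro y hy hy0
    have := hX₀ y hy
    rw [hy0, abs_zero] at this
    linarith
  -- the key claim: the limit of h must be ±π/2
  have hclaim : ∀ ℓ : ℝ, |ℓ| = A → Tendsto h atTop (𝓝 ℓ) → A = π/2 := by
    intro ℓ hℓA hconv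
    by_contra hAne
    have hAlt : A < π/2 := lt_of_le_of_ne hAle hAne
    have hsinA : 0 < Real.sin (2*A) :=
      Real.sin_pos_of_pos_of_lt_pi (by linarith) (by linarith)
    have hsin : Real.sin (2*ℓ) ≠ 0 := by
      rcases (abs_eq hAnonneg).1 hℓA with hcase | hcase
      · rw [hcase]; exact ne_of_gt hsinA
      · rw [hcase, show 2 * -A = -(2*A) by ring, Real.sin_neg]
        exact neg_ne_zero.2 (ne_of_gt hsinA)
    -- the derivative of f converges to -(sin (2ℓ)) ≠ 0
    have hcoth_f : Tendsto (fun x => Real.cosh x / Real.sinh x * f x) atTop (𝓝 0) := by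
      apply squeeze_zero_norm' (a := fun x => Real.cosh 1 / Real.sinh 1 * |f x|)
      · filter_upwards [eventually_ge_atTop (1:ℝ)] with x hx
        rw [Real.norm_eq_abs, abs_mul,
          abs_of_pos (lt_trans one_pos (coth_gt_one (lt_of_lt_of_le one_pos hx)))]
        exact mul_le_mul_of_nonneg_right (coth_le_coth_one hx) (abs_nonneg _)
      · have h1 := (hf0.abs).const_mul (Real.cosh 1 / Real.sinh 1)
        rw [abs_zero, mul_zero] at h1
        exact h1
    have hsinlim : Tendsto (fun x => Real.sin (2 * h x)) atTop (𝓝 (Real.sin (2*ℓ))) :=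
      (Real.continuous_sin.tendsto _).comp (hconv.const_mul 2)
    have hglim : Tendsto (deriv f) atTop (𝓝 (-(Real.sin (2*ℓ)))) := by
      have h1 := hcoth_f.sub hsinlim
      rw [zero_sub] at h1
      apply h1.congr'
      filter_upwards [eventually_gt_atTop (0:ℝ)] with x hx
      exact (hg x hx).symm
    obtain ⟨m, hmdef⟩ : ∃ m : ℝ, m = Real.sin (2*ℓ) := ⟨_, rfl⟩
    rcases hsin.lt_or_gt with hm | hm
    · -- sin(2ℓ) < 0, so deriv f → -sin(2ℓ) > 0 eventually ≥ -m/2 > 0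
      have hev : ∀ᶠ z in atTop, -m/2 < deriv f z := by
        apply hglim.eventually (eventually_gt_nhds ?_)
        rw [hmdef] at *
        linarith
      obtain ⟨X₁, hX₁⟩ := (hev.and (eventually_ge_atTop (1:ℝ))).exists_forall_of_atTop
      have hX₁1 : (1:ℝ) ≤ X₁ := (hX₁ X₁ le_rfl).2
      have hsub1 : Set.Ici X₁ ⊆ Set.Ioi (0:ℝ) := fun z hz =>
        lt_of_lt_of_le one_pos (le_trans hX₁1 hz)
      have hcont1 : ContinuousOn f (Set.Ici X₁) := hfc.mono hsub1
      have hdiff1 : DifferentiableOn ℝ f (interior (Set.Ici X₁)) := by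
        rw [interior_Ici]
        exact fun z hz => (hfd z (hsub1 (Set.mem_Ici.2 (le_of_lt hz)))).differentiableWithinAt
      have hlb1 : ∀ z ∈ interior (Set.Ici X₁), -m/2 ≤ deriv f z := by
        rw [interior_Ici]
        exact fun z hz => (hX₁ z (le_of_lt hz)).1.le
      obtain ⟨y, hydef⟩ : ∃ y : ℝ, y = X₁ + 10/(-m) := ⟨_, rfl⟩
      have hmpos : 0 < -m := by rw [hmdef] at *; linarith
      have hyge : X₁ ≤ y := by
        rw [hydef]
        have : 0 < 10/(-m) := by positivity
        linarith
      have hmv := (convex_Ici X₁).mul_sub_le_image_sub_of_le_deriv hcont1 hdiff1 hlb1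
        X₁ Set.self_mem_Ici y hyge hyge
      have hmne : m ≠ 0 := by rw [hmdef]; exact ne_of_lt hm
      have hprod : -m/2 * (y - X₁) = 5 := by
        rw [hydef]
        field_simp
        ring
      rw [hprod] at hmv
      have hfX₁ := abs_le.1 (habs_f X₁ (hsub1 Set.self_mem_Ici))
      have hfy := abs_le.1 (habs_f y (hsub1 hyge))
      linarith [hfX₁.1, hfy.2]
    · -- sin(2ℓ) > 0, so deriv f → -sin(2ℓ) < 0 eventually ≤ -m/2 < 0
      have hev : ∀ᶠ z in atTop, deriv f z < -m/2 := by
        apply hglim.eventually (eventually_lt_nhds ?_)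
        rw [hmdef] at *
        linarith
      obtain ⟨X₁, hX₁⟩ := (hev.and (eventually_ge_atTop (1:ℝ))).exists_forall_of_atTop
      have hX₁1 : (1:ℝ) ≤ X₁ := (hX₁ X₁ le_rfl).2
      have hsub1 : Set.Ici X₁ ⊆ Set.Ioi (0:ℝ) := fun z hz =>
        lt_of_lt_of_le one_pos (le_trans hX₁1 hz)
      have hcont1 : ContinuousOn f (Set.Ici X₁) := hfc.mono hsub1
      have hdiff1 : DifferentiableOn ℝ f (interior (Set.Ici X₁)) := by
        rw [interior_Ici]
        exact fun z hz => (hfd z (hsub1 (Set.mem_Ici.2 (le_of_lt hz)))).differentiableWithinAt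
      have hub1 : ∀ z ∈ interior (Set.Ici X₁), deriv f z ≤ -m/2 := by
        rw [interior_Ici]
        exact fun z hz => (hX₁ z (le_of_lt hz)).1.le
      obtain ⟨y, hydef⟩ : ∃ y : ℝ, y = X₁ + 10/m := ⟨_, rfl⟩
      have hmpos : 0 < m := by rw [hmdef] at *; linarith
      have hyge : X₁ ≤ y := by
        rw [hydef]
        have : 0 < 10/m := by positivity
        linarith
      have hmv := (convex_Ici X₁).image_sub_le_mul_sub_of_deriv_le hcont1 hdiff1 hub1
        X₁ Set.self_mem_Ici y hyge hyge
      have hmne : m ≠ 0 := by rw [hmdef]; exact ne_of_gt hm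
      have hprod : -m/2 * (y - X₁) = -5 := by
        rw [hydef]
        field_simp
        ring
      rw [hprod] at hmv
      have hfX₁ := abs_le.1 (habs_f X₁ (hsub1 Set.self_mem_Ici))
      have hfy := abs_le.1 (habs_f y (hsub1 hyge))
      linarith [hfX₁.2, hfy.1]
  -- conclude using the constant sign of h on [X₀, ∞)
  rcases sign_const (hhc.mono hsubX) hne with hpos | hneg
  · have heq : (fun x => |h x|) =ᶠ[atTop] h := by
      filter_upwards [eventually_ge_atTop X₀] with x hx
      exact abs_of_pos (hpos x hx)
    have hconv : Tendsto h atTop (𝓝 A) := hA2.congr' heq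
    have hA : A = π/2 := hclaim A (abs_of_nonneg hAnonneg) hconv
    exact ⟨hfdef ▸ hf0, Or.inl (hA ▸ hconv)⟩
  · have heq : (fun x => -|h x|) =ᶠ[atTop] h := by
      filter_upwards [eventually_ge_atTop X₀] with x hx
      rw [abs_of_neg (hneg x hx), neg_neg]
    have hconv : Tendsto h atTop (𝓝 (-A)) := (hA2.neg).congr' heq
    have hA : A = π/2 := hclaim (-A) (by rw [abs_neg, abs_of_nonneg hAnonneg]) hconv
    exact ⟨hfdef ▸ hf0, Or.inr (hA ▸ hconv)⟩
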